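/- Let λ < 0, a > 0, c ∈ ℝ, and ω₁ < 0 < ω₂. Suppose v₁ ∈ ℝ² satisfies F_{ω₁}(v₁) > 0 and F_{ω₂}(v₁) < 0, where F_ω(s,t) = λ²t + ω(λ(c+as)+aω). Then the function γ(τ) = F_{ω₂}(φ(τ, v₁, ω₁)) = aω₁(ω₂−ω₁)λτ + F_{ω₂}(v₁) + (e^{λτ}−1)F_{ω₁}(v₁) has exactly two zeros, one positive and one negative. -/

import Mathlib

set_option maxHeartbeats 2000000 in
/-- For λ < 0, a > 0, ω₁ < 0 < ω₂ and v₁ with F_{ω₁}(v₁) > 0, F_{ω₂}(v₁) < 0,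
the function γ(τ) = aω₁(ω₂−ω₁)λτ + F_{ω₂}(v₁) + (e^{λτ}−1)F_{ω₁}(v₁)
has exactly two zeros, one positive and one negative. -/
theorem stmt12 (a c lam ω₁ ω₂ : ℝ) (hlam : lam < 0) (ha : 0 < a)
    (hω₁ : ω₁ < 0) (hω₂ : 0 < ω₂)
    (F : ℝ → ℝ × ℝ → ℝ)
    (hF : ∀ ω : ℝ, ∀ p : ℝ × ℝ,
      F ω p = lam ^ 2 * p.2 + ω * (lam * (c + a * p.1) + a * ω))
    (v₁ : ℝ × ℝ) (hv₁pos : 0 < F ω₁ v₁) (hv₁neg : F ω₂ v₁ < 0)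
    (γ : ℝ → ℝ)
    (hγ : ∀ τ : ℝ, γ τ = a * ω₁ * (ω₂ - ω₁) * lam * τ + F ω₂ v₁ +
      (Real.exp (lam * τ) - 1) * F ω₁ v₁) :
    ∃ τp τn : ℝ, 0 < τp ∧ τn < 0 ∧ γ τp = 0 ∧ γ τn = 0 ∧
      ∀ τ : ℝ, γ τ = 0 → τ = τp ∨ τ = τn := by
  obtain ⟨A, hA⟩ : ∃ x, F ω₁ v₁ = x := ⟨_, rfl⟩
  obtain ⟨B, hB⟩ : ∃ x, F ω₂ v₁ = x := ⟨_, rfl⟩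
  obtain ⟨K, hKdef⟩ : ∃ x, a * ω₁ * (ω₂ - ω₁) * lam = x := ⟨_, rfl⟩
  rw [hA] at hv₁pos
  rw [hB] at hv₁neg
  simp only [hA, hB, hKdef] at hγ
  have hA0 : 0 < A := hv₁pos
  have hB0 : B < 0 := hv₁neg
  have hK : 0 < K := by
    have h1 : a * ω₁ * (ω₂ - ω₁) < 0 :=
      mul_neg_of_neg_of_pos (mul_neg_of_pos_of_neg ha hω₁) (by linarith)
    nlinarith [hKdef]
  have hγf : γ = fun τ => K * τ + B + (Real.exp (lam * τ) - 1) * A := by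
    funext τ; exact hγ τ
  have hlamA : lam * A < 0 := mul_neg_of_neg_of_pos hlam hA0
  have hlamA' : lam * A ≠ 0 := ne_of_lt hlamA
  -- derivative
  have hd : ∀ τ : ℝ, HasDerivAt γ (K + lam * Real.exp (lam * τ) * A) τ := by
    intro τ
    rw [hγf]
    have h1 : HasDerivAt (fun τ : ℝ => Real.exp (lam * τ)) (Real.exp (lam * τ) * lam) τ :=
      (Real.hasDerivAt_exp (lam * τ)).comp τ
        (by simpa using (hasDerivAt_id τ).const_mul lam)
    have h2 := (((hasDerivAt_id τ).const_mul K).add_const B).add ((h1.sub_const 1).mul_const A)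
    rw [show K + lam * Real.exp (lam * τ) * A = K * 1 + Real.exp (lam * τ) * lam * A by ring]
    exact h2
  have hcont : Continuous γ := by rw [hγf]; fun_prop
  -- critical point
  obtain ⟨τ₀, hτ₀⟩ : ∃ x, Real.log (K / (-(lam * A))) / lam = x := ⟨_, rfl⟩
  have hpos : 0 < K / (-(lam * A)) := div_pos hK (by linarith)
  have hexpτ₀ : Real.exp (lam * τ₀) = K / (-(lam * A)) := by
    rw [← hτ₀, mul_div_cancel₀ _ (ne_of_lt hlam)]
    exact Real.exp_log hpos
  have hlam' : lam ≠ 0 := ne_of_lt hlam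
  have hA' : A ≠ 0 := ne_of_gt hA0
  have hkey : lam * (K / (-(lam * A))) * A = -K := by
    field_simp
  -- strict anti on Iic τ₀, strict mono on Ici τ₀
  have hanti : StrictAntiOn γ (Set.Iic τ₀) := by
    apply strictAntiOn_of_deriv_neg (convex_Iic τ₀) hcont.continuousOn
    intro x hx
    rw [interior_Iic] at hx
    rw [(hd x).deriv]
    have hexp : Real.exp (lam * τ₀) < Real.exp (lam * x) := by
      apply Real.exp_lt_exp.mpr
      have := hx.out
      nlinarith
    rw [hexpτ₀] at hexp
    nlinarith [mul_lt_mul_of_neg_left hexp hlamA, hkey]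
  have hmono : StrictMonoOn γ (Set.Ici τ₀) := by
    apply strictMonoOn_of_deriv_pos (convex_Ici τ₀) hcont.continuousOn
    intro x hx
    rw [interior_Ici] at hx
    rw [(hd x).deriv]
    have hexp : Real.exp (lam * x) < Real.exp (lam * τ₀) := by
      apply Real.exp_lt_exp.mpr
      have := hx.out
      nlinarith
    rw [hexpτ₀] at hexp
    nlinarith [mul_lt_mul_of_neg_left hexp hlamA, hkey]
  have hγ0 : γ 0 = B := by rw [hγ]; simp
  have hγτ₀ : γ τ₀ < 0 := by
    rcases lt_trichotomy τ₀ 0 with h | h | h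
    · have := hmono Set.self_mem_Ici (Set.mem_Ici.mpr h.le) h
      linarith [hγ0]
    · rw [h]; linarith [hγ0]
    · have := hanti (Set.mem_Iic.mpr h.le) Set.self_mem_Iic h
      linarith [hγ0]
  -- a point to the right where γ > 0
  obtain ⟨T, hT⟩ : ∃ x, max (τ₀ + 1) ((A - B + 1) / K) = x := ⟨_, rfl⟩
  have hτ₀T : τ₀ < T := by
    have h1 : τ₀ + 1 ≤ T := by rw [← hT]; exact le_max_left _ _
    linarith
  have hγT : 0 < γ T := by
    rw [hγ T]
    have h1 : (A - B + 1) / K ≤ T := by rw [← hT]; exact le_max_right _ _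
    have h2 : A - B + 1 ≤ K * T := by
      rw [div_le_iff₀ hK] at h1
      nlinarith
    have h3 : (0:ℝ) < Real.exp (lam * T) := Real.exp_pos _
    nlinarith [mul_pos h3 hA0]
  -- a point to the left where γ > 0
  have hquad : ∀ x : ℝ, 0 ≤ x → x ^ 2 / 4 ≤ Real.exp x := by
    intro x hx
    have h1 : x / 2 + 1 ≤ Real.exp (x / 2) := Real.add_one_le_exp (x / 2)
    have h2 : Real.exp x = Real.exp (x / 2) * Real.exp (x / 2) := by
      rw [← Real.exp_add]; ring_nf
    nlinarith [Real.exp_pos (x / 2)]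
  have hl2 : 0 < lam ^ 2 := by nlinarith
  have hAl2 : 0 < A * lam ^ 2 := mul_pos hA0 hl2
  obtain ⟨M, hM⟩ : ∃ x, max 1 (4 * (K + A - B + 1) / (A * lam ^ 2)) = x := ⟨_, rfl⟩
  have hM1 : 1 ≤ M := by rw [← hM]; exact le_max_left _ _
  have hM2 : K + A - B + 1 ≤ A * lam ^ 2 * M / 4 := by
    have h1 : 4 * (K + A - B + 1) / (A * lam ^ 2) ≤ M := by rw [← hM]; exact le_max_right _ _
    rw [div_le_iff₀ hAl2] at h1
    linarith
  obtain ⟨S, hSdef⟩ : ∃ x, min (τ₀ - 1) (-M) = x := ⟨_, rfl⟩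
  have hSτ₀ : S < τ₀ := by
    have h1 : S ≤ τ₀ - 1 := by rw [← hSdef]; exact min_le_left _ _
    linarith
  have hSM : S ≤ -M := by rw [← hSdef]; exact min_le_right _ _
  have hS0 : S ≤ 0 := by linarith
  have hnegS : 1 ≤ -S := by linarith
  have hγS : 0 < γ S := by
    rw [hγ S]
    have h1 : 0 ≤ lam * S := by
      have h := mul_nonneg (neg_nonneg.2 hlam.le) (neg_nonneg.2 hS0)
      rw [neg_mul_neg] at h
      exact h
    have h2 : (lam * S) ^ 2 / 4 ≤ Real.exp (lam * S) := hquad _ h1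
    have hc : K + A - B + 1 ≤ A * lam ^ 2 * (-S) / 4 := by
      refine le_trans hM2 ?_
      have : A * lam ^ 2 * M ≤ A * lam ^ 2 * (-S) :=
        mul_le_mul_of_nonneg_left (by linarith) hAl2.le
      linarith
    have hc2 : (K + A - B + 1) * (-S) ≤ A * lam ^ 2 * S ^ 2 / 4 := by
      have h := mul_le_mul_of_nonneg_right hc (by linarith : (0:ℝ) ≤ -S)
      have heq : A * lam ^ 2 * (-S) / 4 * (-S) = A * lam ^ 2 * S ^ 2 / 4 := by ring
      linarith
    have hc4 : A * ((lam * S) ^ 2 / 4) ≤ A * Real.exp (lam * S) :=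
      mul_le_mul_of_nonneg_left h2 hA0.le
    have hc5 : (A - B + 1) * 1 ≤ (A - B + 1) * (-S) :=
      mul_le_mul_of_nonneg_left hnegS (by linarith)
    have e1 : (Real.exp (lam * S) - 1) * A = A * Real.exp (lam * S) - A := by ring
    have e2 : A * ((lam * S) ^ 2 / 4) = A * lam ^ 2 * S ^ 2 / 4 := by ring
    have e3 : (K + A - B + 1) * (-S) = -(K * S) + (A - B + 1) * (-S) := by ring
    linarith [hc2, hc4, hc5, e1, e2, e3]
  -- IVT for the positive zero
  obtain ⟨τp, hτpmem, hτpz⟩ : ∃ τp ∈ Set.Icc τ₀ T, γ τp = 0 := by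
    have h := intermediate_value_Icc hτ₀T.le hcont.continuousOn
    obtain ⟨x, hx, hx0⟩ := h ⟨hγτ₀.le, hγT.le⟩
    exact ⟨x, hx, hx0⟩
  -- IVT for the negative zero
  obtain ⟨τn, hτnmem, hτnz⟩ : ∃ τn ∈ Set.Icc S τ₀, γ τn = 0 := by
    have h := intermediate_value_Icc' hSτ₀.le hcont.continuousOn
    obtain ⟨x, hx, hx0⟩ := h ⟨hγτ₀.le, hγS.le⟩
    exact ⟨x, hx, hx0⟩
  have hτpIci : τp ∈ Set.Ici τ₀ := hτpmem.1
  have hτnIic : τn ∈ Set.Iic τ₀ := hτnmem.2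
  have hτppos : 0 < τp := by
    rcases lt_trichotomy τp 0 with h' | h' | h'
    · have h0 : (0:ℝ) ∈ Set.Ici τ₀ := Set.mem_Ici.mpr (le_trans hτpIci h'.le)
      have := hmono hτpIci h0 h'
      rw [hτpz, hγ0] at this
      linarith
    · rw [h', hγ0] at hτpz
      linarith
    · exact h'
  have hτnneg : τn < 0 := by
    rcases lt_trichotomy τn 0 with h' | h' | h'
    · exact h'
    · rw [h', hγ0] at hτnz
      linarith
    · have h0 : (0:ℝ) ∈ Set.Iic τ₀ := Set.mem_Iic.mpr (le_trans h'.le hτnIic)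
      have := hanti h0 hτnIic h'
      rw [hτnz, hγ0] at this
      linarith
  refine ⟨τp, τn, hτppos, hτnneg, hτpz, hτnz, ?_⟩
  intro τ hτz
  rcases le_total τ τ₀ with h | h
  · right
    exact hanti.injOn (Set.mem_Iic.mpr h) hτnIic (by rw [hτnz, hτz])
  · left
    exact hmono.injOn (Set.mem_Ici.mpr h) hτpIci (by rw [hτpz, hτz])
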